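/- arXiv:1210.5664 — 5 statements merged into one kernel-verified Lean document; each statement's English description precedes it below -/
import Mathlib

section
/- The Single-Linkage partitioning function satisfies k-Richness: for every k-partitioning Γ of S = {1,...,n} with 1 ≤ k ≤ n, there exists a similarity function s with SL(s,k) = Γ. -/
noncomputable section

open Finset

/-- `s` is a similarity function: symmetric and positive off the diagonal. -/
def Sim {n : ℕ} (s : Fin n → Fin n → ℝ) : Prop :=
  (∀ i j, s i j = s j i) ∧ ∀ i j, i ≠ j → 0 < s i j

/-- The cluster of a clustering `C` containing the point `i`. -/
def clusterOf {n : ℕ} (C : Finset (Finset (Fin n))) (i : Fin n) : Finset (Fin n) :=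
  (C.filter fun c => i ∈ c).sup id

/-- All ordered pairs of points lying in different clusters of `C`, tagged with
their similarity, ordered lexicographically by (similarity, pair). -/
def interPairs {n : ℕ} (s : Fin n → Fin n → ℝ) (C : Finset (Finset (Fin n))) :
    Finset (ℝ ×ₗ (Fin n ×ₗ Fin n)) :=
  (Finset.univ.filter fun p : Fin n × Fin n => clusterOf C p.1 ≠ clusterOf C p.2).image
    fun p => toLex (s p.1 p.2, toLex p)

/-- One agglomerative step of Single-Linkage: merge the two clusters joined by
the largest-similarity inter-cluster edge (ties broken by a fixed order on pairs). -/
def slStep {n : ℕ} (s : Fin n → Fin n → ℝ) (C : Finset (Finset (Fin n))) :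
    Finset (Finset (Fin n)) :=
  match (interPairs s C).max with
  | none => C
  | some m =>
      let p := ofLex (ofLex m).2
      insert (clusterOf C p.1 ∪ clusterOf C p.2)
        ((C.erase (clusterOf C p.1)).erase (clusterOf C p.2))

/-- The Single-Linkage `k`-partitioning: start from singletons and merge `n - k` times. -/
def SL {n : ℕ} (s : Fin n → Fin n → ℝ) (k : ℕ) : Finset (Finset (Fin n)) :=
  (slStep s)^[n - k] (Finset.univ.image fun i => ({i} : Finset (Fin n)))


/-- `Γ` is a `k`-partitioning of `{1,…,n}`. -/
def IsKPartition {n : ℕ} (Γ : Finset (Finset (Fin n))) (k : ℕ) : Prop :=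
  Γ.card = k ∧ (∀ c ∈ Γ, c.Nonempty) ∧
    (∀ c ∈ Γ, ∀ c' ∈ Γ, c ≠ c' → Disjoint c c') ∧ Γ.sup id = Finset.univ

namespace SLrich
variable {n : ℕ}

/-- A partition refining Γ. -/
def Good (Γ C : Finset (Finset (Fin n))) : Prop :=
  (∀ c ∈ C, c.Nonempty) ∧ (∀ c ∈ C, ∀ c' ∈ C, c ≠ c' → Disjoint c c') ∧
    C.sup id = Finset.univ ∧ ∀ c ∈ C, ∃ g ∈ Γ, c ⊆ g

lemma clusterOf_eq {C : Finset (Finset (Fin n))}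
    (hd : ∀ c ∈ C, ∀ c' ∈ C, c ≠ c' → Disjoint c c')
    {c : Finset (Fin n)} (hc : c ∈ C) {i : Fin n} (hi : i ∈ c) : clusterOf C i = c := by
  unfold clusterOf
  have hfil : C.filter (fun d => i ∈ d) = {c} := by
    ext d
    simp only [Finset.mem_filter, Finset.mem_singleton]
    constructor
    · rintro ⟨hdC, hid⟩
      by_contra hne
      exact (Finset.disjoint_left.1 (hd d hdC c hc hne)) hid hi
    · rintro rfl; exact ⟨hc, hi⟩
  rw [hfil, Finset.sup_singleton, id]

lemma mem_clusterOf {C : Finset (Finset (Fin n))}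
    (hd : ∀ c ∈ C, ∀ c' ∈ C, c ≠ c' → Disjoint c c')
    (hcov : C.sup id = Finset.univ) (i : Fin n) :
    clusterOf C i ∈ C ∧ i ∈ clusterOf C i := by
  have : i ∈ C.sup id := by rw [hcov]; exact Finset.mem_univ i
  obtain ⟨c, hcC, hic⟩ := Finset.mem_sup.1 this
  rw [clusterOf_eq hd hcC hic]
  exact ⟨hcC, hic⟩

end SLrich
namespace SLrich
variable {n : ℕ}

/-- The similarity: 2 within a Γ-cluster, 1 across. -/
def sΓ (Γ : Finset (Finset (Fin n))) (i j : Fin n) : ℝ :=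
  if clusterOf Γ i = clusterOf Γ j then 2 else 1

lemma sΓ_sim (Γ : Finset (Finset (Fin n))) : Sim (sΓ Γ) := by
  constructor
  · intro i j; unfold sΓ; by_cases h : clusterOf Γ i = clusterOf Γ j
    · rw [if_pos h, if_pos h.symm]
    · rw [if_neg h, if_neg (fun h' => h h'.symm)]
  · intro i j _; unfold sΓ; split <;> norm_num

lemma sΓ_le_two (Γ : Finset (Finset (Fin n))) (i j : Fin n) : sΓ Γ i j ≤ 2 := by
  unfold sΓ; split <;> norm_num

lemma sΓ_eq_two_iff (Γ : Finset (Finset (Fin n))) (i j : Fin n) :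
    sΓ Γ i j = 2 ↔ clusterOf Γ i = clusterOf Γ j := by
  unfold sΓ
  constructor
  · intro h; by_contra hne; rw [if_neg hne] at h; norm_num at h
  · intro h; rw [if_pos h]

end SLrich
namespace SLrich
variable {n : ℕ}

def toΓ (Γ : Finset (Finset (Fin n))) (c : Finset (Fin n)) : Finset (Fin n) :=
  if h : c.Nonempty then clusterOf Γ (c.min' h) else ∅

lemma toΓ_eq {Γ : Finset (Finset (Fin n))}
    (hΓd : ∀ c ∈ Γ, ∀ c' ∈ Γ, c ≠ c' → Disjoint c c')
    {g : Finset (Fin n)} (hg : g ∈ Γ) {c : Finset (Fin n)} (hne : c.Nonempty)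
    (hsub : c ⊆ g) : toΓ Γ c = g := by
  unfold toΓ; rw [dif_pos hne]; exact clusterOf_eq hΓd hg (hsub (c.min'_mem hne))

lemma slStep_good (Γ : Finset (Finset (Fin n)))
    (hΓd : ∀ c ∈ Γ, ∀ c' ∈ Γ, c ≠ c' → Disjoint c c')
    (C : Finset (Finset (Fin n))) (hC : Good Γ C) (hcard : Γ.card < C.card) :
    Good Γ (slStep (sΓ Γ) C) ∧ (slStep (sΓ Γ) C).card + 1 = C.card := by
  obtain ⟨hne, hd, hcov, href⟩ := hC
  have hmaps : ∀ c ∈ C, toΓ Γ c ∈ Γ := by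
    intro c hc; obtain ⟨g, hg, hsub⟩ := href c hc
    rw [toΓ_eq hΓd hg (hne c hc) hsub]; exact hg
  obtain ⟨c₁, hc₁, c₂, hc₂, hne12, heq⟩ :=
    Finset.exists_ne_map_eq_of_card_lt_of_maps_to hcard hmaps
  set i := c₁.min' (hne c₁ hc₁) with hi
  set j := c₂.min' (hne c₂ hc₂) with hj
  have hic : i ∈ c₁ := c₁.min'_mem _
  have hjc : j ∈ c₂ := c₂.min'_mem _
  have hci : clusterOf C i = c₁ := clusterOf_eq hd hc₁ hic
  have hcj : clusterOf C j = c₂ := clusterOf_eq hd hc₂ hjc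
  have heq' : clusterOf Γ i = clusterOf Γ j := by
    unfold toΓ at heq
    rwa [dif_pos (hne c₁ hc₁), dif_pos (hne c₂ hc₂)] at heq
  have h2 : sΓ Γ i j = 2 := (sΓ_eq_two_iff Γ i j).2 heq'
  have hpair : toLex (sΓ Γ i j, toLex ((i, j) : Fin n × Fin n)) ∈ interPairs (sΓ Γ) C := by
    unfold interPairs
    exact Finset.mem_image.2 ⟨(i, j),
      Finset.mem_filter.2 ⟨Finset.mem_univ _, by simpa [hci, hcj] using hne12⟩, rfl⟩
  obtain ⟨m, hmax⟩ := Finset.max_of_nonempty ⟨_, hpair⟩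
  have hmmem := Finset.mem_of_max hmax
  obtain ⟨q, hq, hqm⟩ := Finset.mem_image.1 hmmem
  have hqne : clusterOf C q.1 ≠ clusterOf C q.2 := (Finset.mem_filter.1 hq).2
  have hle : toLex (sΓ Γ i j, toLex ((i, j) : Fin n × Fin n)) ≤
      toLex (sΓ Γ q.1 q.2, toLex q) := by
    have h1 := Finset.le_max hpair
    rw [hmax] at h1
    rw [hqm]
    exact WithBot.coe_le_coe.1 h1
  have h2q : sΓ Γ q.1 q.2 = 2 := by
    rcases (Prod.Lex.le_iff.1 hle : sΓ Γ i j < sΓ Γ q.1 q.2 ∨ sΓ Γ i j = sΓ Γ q.1 q.2 ∧ _) with h | h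
    · exact absurd (h2 ▸ h) (not_lt.2 (sΓ_le_two Γ q.1 q.2))
    · exact (h2 ▸ h.1).symm
  have hq2 : clusterOf Γ q.1 = clusterOf Γ q.2 := (sΓ_eq_two_iff Γ q.1 q.2).1 h2q
  set A := clusterOf C q.1 with hAdef
  set B := clusterOf C q.2 with hBdef
  have hA : A ∈ C ∧ q.1 ∈ A := mem_clusterOf hd hcov q.1
  have hB : B ∈ C ∧ q.2 ∈ B := mem_clusterOf hd hcov q.2
  have hstep : slStep (sΓ Γ) C = insert (A ∪ B) ((C.erase A).erase B) := by
    unfold slStep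
    rw [hmax, ← hqm]
    rfl
  -- A ∪ B is a genuinely new cluster
  have hUnotinC : A ∪ B ∉ C := by
    intro hmem
    by_cases hUA : A ∪ B = A
    · exact (Finset.disjoint_left.1 (hd A hA.1 B hB.1 hqne)) (hUA ▸ Finset.mem_union_right A hB.2) hB.2
    · exact (Finset.disjoint_left.1 (hd (A ∪ B) hmem A hA.1 hUA))
        (Finset.mem_union_left B hA.2) hA.2
  have hUnotin : A ∪ B ∉ (C.erase A).erase B :=
    fun hmem => hUnotinC (Finset.mem_of_mem_erase (Finset.mem_of_mem_erase hmem))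
  have hBmem' : B ∈ C.erase A := Finset.mem_erase.2 ⟨fun h => hqne h.symm, hB.1⟩
  have hmemD : ∀ d, d ∈ slStep (sΓ Γ) C ↔ d = A ∪ B ∨ (d ∈ C ∧ d ≠ A ∧ d ≠ B) := by
    intro d
    rw [hstep, Finset.mem_insert, Finset.mem_erase, Finset.mem_erase]
    tauto
  have hcard2 : 2 ≤ C.card := Finset.one_lt_card.2 ⟨A, hA.1, B, hB.1, hqne⟩
  constructor
  · refine ⟨?_, ?_, ?_, ?_⟩
    · intro d hdm
      rcases (hmemD d).1 hdm with rfl | ⟨hdC, _, _⟩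
      · exact ⟨q.1, Finset.mem_union_left B hA.2⟩
      · exact hne d hdC
    · intro d hdm d' hdm' hdd'
      rcases (hmemD d).1 hdm with rfl | ⟨hdC, hdA, hdB⟩ <;>
        rcases (hmemD d').1 hdm' with rfl | ⟨hdC', hdA', hdB'⟩
      · exact absurd rfl hdd'
      · exact Finset.disjoint_union_left.2
          ⟨hd A hA.1 d' hdC' (fun h => hdA' h.symm), hd B hB.1 d' hdC' (fun h => hdB' h.symm)⟩
      · exact (Finset.disjoint_union_left.2
          ⟨hd A hA.1 d hdC (fun h => hdA h.symm), hd B hB.1 d hdC (fun h => hdB h.symm)⟩).symm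
      · exact hd d hdC d' hdC' hdd'
    · apply Finset.eq_univ_iff_forall.2
      intro x
      have hx : x ∈ C.sup id := by rw [hcov]; exact Finset.mem_univ x
      obtain ⟨c, hcC, hxc⟩ := Finset.mem_sup.1 hx
      apply Finset.mem_sup.2
      by_cases hcA : c = A
      · exact ⟨A ∪ B, (hmemD _).2 (Or.inl rfl), Finset.mem_union_left B (hcA ▸ hxc)⟩
      by_cases hcB : c = B
      · exact ⟨A ∪ B, (hmemD _).2 (Or.inl rfl), Finset.mem_union_right A (hcB ▸ hxc)⟩
      · exact ⟨c, (hmemD _).2 (Or.inr ⟨hcC, hcA, hcB⟩), hxc⟩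
    · intro d hdm
      rcases (hmemD d).1 hdm with rfl | ⟨hdC, _, _⟩
      · obtain ⟨gA, hgA, hsubA⟩ := href A hA.1
        obtain ⟨gB, hgB, hsubB⟩ := href B hB.1
        have e1 : clusterOf Γ q.1 = gA := clusterOf_eq hΓd hgA (hsubA hA.2)
        have e2 : clusterOf Γ q.2 = gB := clusterOf_eq hΓd hgB (hsubB hB.2)
        have : gA = gB := by rw [← e1, ← e2, hq2]
        exact ⟨gA, hgA, Finset.union_subset hsubA (this ▸ hsubB)⟩
      · exact href d hdC
  · rw [hstep, Finset.card_insert_of_notMem hUnotin,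
      Finset.card_erase_of_mem hBmem', Finset.card_erase_of_mem hA.1]
    omega

end SLrich
namespace SLrich
variable {n : ℕ}

lemma refine_eq {Γ C : Finset (Finset (Fin n))}
    (hΓne : ∀ c ∈ Γ, c.Nonempty)
    (hΓd : ∀ c ∈ Γ, ∀ c' ∈ Γ, c ≠ c' → Disjoint c c')
    (hC : Good Γ C) (hcard : C.card = Γ.card) : C = Γ := by
  obtain ⟨hne, hd, hcov, href⟩ := hC
  have hmaps : ∀ c ∈ C, toΓ Γ c ∈ Γ ∧ c ⊆ toΓ Γ c := by
    intro c hc; obtain ⟨g, hg, hsub⟩ := href c hc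
    rw [toΓ_eq hΓd hg (hne c hc) hsub]; exact ⟨hg, hsub⟩
  have himg : C.image (toΓ Γ) = Γ := by
    apply Finset.Subset.antisymm
    · intro g hg
      obtain ⟨c, hc, rfl⟩ := Finset.mem_image.1 hg
      exact (hmaps c hc).1
    · intro g hg
      obtain ⟨x, hx⟩ := hΓne g hg
      have hx' : x ∈ C.sup id := by rw [hcov]; exact Finset.mem_univ x
      obtain ⟨c, hc, hxc⟩ := Finset.mem_sup.1 hx'
      have hmc := hmaps c hc
      have hgeq : toΓ Γ c = g := by
        by_contra hne'
        exact Finset.disjoint_left.1 (hΓd _ hmc.1 g hg hne') (hmc.2 hxc) hx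
      exact Finset.mem_image.2 ⟨c, hc, hgeq⟩
  have hinj : Set.InjOn (toΓ Γ) C := Finset.card_image_iff.1 (by rw [himg, hcard])
  have hceq : ∀ c ∈ C, c = toΓ Γ c := by
    intro c hc
    apply Finset.Subset.antisymm (hmaps c hc).2
    intro x hx
    have hx' : x ∈ C.sup id := by rw [hcov]; exact Finset.mem_univ x
    obtain ⟨c', hc', hxc'⟩ := Finset.mem_sup.1 hx'
    have hg' : toΓ Γ c' = toΓ Γ c := by
      by_contra hne'
      exact Finset.disjoint_left.1
        (hΓd _ (hmaps c' hc').1 _ (hmaps c hc).1 hne') ((hmaps c' hc').2 hxc') hx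
    have := hinj (Finset.mem_coe.2 hc') (Finset.mem_coe.2 hc) hg'
    exact this ▸ hxc'
  have hsub : C ⊆ Γ := fun c hc => (hceq c hc) ▸ (hmaps c hc).1
  exact Finset.eq_of_subset_of_card_le hsub (le_of_eq hcard.symm)

end SLrich

open SLrich in
theorem SL_k_rich' {n : ℕ} (k : ℕ) (hk1 : 1 ≤ k) (hkn : k ≤ n)
    (Γ : Finset (Finset (Fin n))) (hΓ : IsKPartition Γ k) :
    ∃ s : Fin n → Fin n → ℝ, Sim s ∧ SL s k = Γ := by
  obtain ⟨hk, hΓne, hΓd, hΓcov⟩ := hΓ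
  refine ⟨sΓ Γ, sΓ_sim Γ, ?_⟩
  set init : Finset (Finset (Fin n)) := Finset.univ.image fun i => ({i} : Finset (Fin n))
    with hinit
  have hmemi : ∀ c, c ∈ init ↔ ∃ i, ({i} : Finset (Fin n)) = c := by
    intro c; rw [hinit, Finset.mem_image]; simp
  have key : ∀ t, t ≤ n - k →
      Good Γ ((slStep (sΓ Γ))^[t] init) ∧ ((slStep (sΓ Γ))^[t] init).card + t = n := by
    intro t
    induction t with
    | zero =>
      intro _
      simp only [Function.iterate_zero_apply, Nat.add_zero]
      refine ⟨⟨?_, ?_, ?_, ?_⟩, ?_⟩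
      · intro c hc; obtain ⟨i, rfl⟩ := (hmemi c).1 hc; exact Finset.singleton_nonempty i
      · intro c hc c' hc' hne'
        obtain ⟨i, rfl⟩ := (hmemi c).1 hc
        obtain ⟨j, rfl⟩ := (hmemi c').1 hc'
        have : i ≠ j := fun h => hne' (by rw [h])
        simp [Finset.disjoint_singleton, this, Ne.symm this]
      · apply Finset.eq_univ_iff_forall.2
        intro x
        exact Finset.mem_sup.2 ⟨{x}, (hmemi _).2 ⟨x, rfl⟩, Finset.mem_singleton_self x⟩
      · intro c hc
        obtain ⟨i, rfl⟩ := (hmemi c).1 hc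
        have := mem_clusterOf hΓd hΓcov i
        exact ⟨clusterOf Γ i, this.1, Finset.singleton_subset_iff.2 this.2⟩
      · rw [hinit, Finset.card_image_of_injective _ Finset.singleton_injective,
          Finset.card_univ, Fintype.card_fin]
    | succ t ih =>
      intro h
      obtain ⟨hgood, hcard⟩ := ih (by omega)
      have hgt : Γ.card < ((slStep (sΓ Γ))^[t] init).card := by rw [hk]; omega
      obtain ⟨hg', hc'⟩ := slStep_good Γ hΓd _ hgood hgt
      rw [Function.iterate_succ_apply']
      exact ⟨hg', by omega⟩
  obtain ⟨hgood, hcard⟩ := key (n - k) le_rfl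
  have : ((slStep (sΓ Γ))^[n - k] init).card = Γ.card := by rw [hk]; omega
  exact refine_eq hΓne hΓd hgood this
/-- Single-Linkage satisfies k-Richness. -/
theorem SL_k_rich {n : ℕ} (k : ℕ) (hk1 : 1 ≤ k) (hkn : k ≤ n)
    (Γ : Finset (Finset (Fin n))) (hΓ : IsKPartition Γ k) :
    ∃ s : Fin n → Fin n → ℝ, Sim s ∧ SL s k = Γ := by
  exact SL_k_rich' k hk1 hkn Γ hΓ
end
end

section
/- The Single-Linkage partitioning function satisfies Consistency: if Γ = SL(s,k) and s' is a Γ-transformation of s (s'(i,j) ≥ s(i,j) whenever i,j lie in the same cluster of Γ, and s'(i,j) ≤ s(i,j) whenever i,j lie in different clusters of Γ), then SL(s',k) = Γ. -/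
noncomputable section

open Finset

/-- Points `i` and `j` lie in the same cluster of `Γ`. -/
def SameCluster {n : ℕ} (Γ : Finset (Finset (Fin n))) (i j : Fin n) : Prop :=
  ∃ c ∈ Γ, i ∈ c ∧ j ∈ c

namespace SLProof

variable {n : ℕ}

def IsPartition (C : Finset (Finset (Fin n))) : Prop :=
  (∀ i : Fin n, ∃ c ∈ C, i ∈ c) ∧
  (∀ c ∈ C, ∀ d ∈ C, c ≠ d → Disjoint c d) ∧
  (∀ c ∈ C, c.Nonempty)

lemma clusterOf_eq_of_mem {C : Finset (Finset (Fin n))} (hC : IsPartition C)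
    {c : Finset (Fin n)} {i : Fin n} (hc : c ∈ C) (hi : i ∈ c) : clusterOf C i = c := by
  have hf : C.filter (fun d => i ∈ d) = {c} := by
    apply Finset.eq_singleton_iff_unique_mem.mpr
    refine ⟨Finset.mem_filter.mpr ⟨hc, hi⟩, ?_⟩
    intro d hd
    rcases Finset.mem_filter.mp hd with ⟨hdC, hid⟩
    by_contra hne
    exact (Finset.disjoint_left.mp (hC.2.1 d hdC c hc hne) hid) hi
  rw [clusterOf, hf]; simp

lemma clusterOf_mem {C : Finset (Finset (Fin n))} (hC : IsPartition C) (i : Fin n) :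
    clusterOf C i ∈ C ∧ i ∈ clusterOf C i := by
  obtain ⟨c, hc, hi⟩ := hC.1 i
  rw [clusterOf_eq_of_mem hC hc hi]; exact ⟨hc, hi⟩

lemma mem_clusterOf_iff {C : Finset (Finset (Fin n))} (hC : IsPartition C) {i x : Fin n} :
    x ∈ clusterOf C i ↔ clusterOf C x = clusterOf C i := by
  constructor
  · intro hx
    exact clusterOf_eq_of_mem hC (clusterOf_mem hC i).1 hx
  · intro h
    exact h ▸ (clusterOf_mem hC x).2

lemma sameCluster_iff {Γ : Finset (Finset (Fin n))} (hΓ : IsPartition Γ) {i j : Fin n} :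
    SameCluster Γ i j ↔ clusterOf Γ i = clusterOf Γ j := by
  constructor
  · rintro ⟨c, hc, hi, hj⟩
    rw [clusterOf_eq_of_mem hΓ hc hi, clusterOf_eq_of_mem hΓ hc hj]
  · intro h
    exact ⟨clusterOf Γ i, (clusterOf_mem hΓ i).1, (clusterOf_mem hΓ i).2,
      h ▸ (clusterOf_mem hΓ j).2⟩

lemma mem_interPairs {s : Fin n → Fin n → ℝ} {C : Finset (Finset (Fin n))}
    {m : ℝ ×ₗ (Fin n ×ₗ Fin n)} :
    m ∈ interPairs s C ↔ ∃ p : Fin n × Fin n,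
      clusterOf C p.1 ≠ clusterOf C p.2 ∧ toLex ((s p.1 p.2 : ℝ), toLex p) = m := by
  simp [interPairs]

def mergeC (C : Finset (Finset (Fin n))) (a b : Finset (Fin n)) : Finset (Finset (Fin n)) :=
  insert (a ∪ b) ((C.erase a).erase b)

variable {C : Finset (Finset (Fin n))} {a b : Finset (Fin n)}

lemma union_notMem (hC : IsPartition C) (ha : a ∈ C) (hb : b ∈ C) (hab : a ≠ b) :
    a ∪ b ∉ C := by
  intro hd
  have hdisj := hC.2.1 a ha b hb hab
  by_cases h : a = a ∪ b
  · obtain ⟨x, hx⟩ := hC.2.2 b hb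
    exact (Finset.disjoint_left.mp hdisj (h ▸ Finset.mem_union_right a hx)) hx
  · obtain ⟨x, hx⟩ := hC.2.2 a ha
    exact (Finset.disjoint_left.mp (hC.2.1 a ha (a ∪ b) hd h) hx)
      (Finset.mem_union_left b hx)

lemma mem_mergeC {c : Finset (Fin n)} :
    c ∈ mergeC C a b ↔ c = a ∪ b ∨ (c ∈ C ∧ c ≠ a ∧ c ≠ b) := by
  simp [mergeC, Finset.mem_insert, Finset.mem_erase]
  tauto

lemma merge_isPartition (hC : IsPartition C) (ha : a ∈ C) (hb : b ∈ C) (hab : a ≠ b) :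
    IsPartition (mergeC C a b) := by
  refine ⟨?_, ?_, ?_⟩
  · intro i
    obtain ⟨c, hc, hi⟩ := hC.1 i
    by_cases h1 : c = a
    · exact ⟨a ∪ b, mem_mergeC.mpr (Or.inl rfl), Finset.mem_union_left b (h1 ▸ hi)⟩
    by_cases h2 : c = b
    · exact ⟨a ∪ b, mem_mergeC.mpr (Or.inl rfl), Finset.mem_union_right a (h2 ▸ hi)⟩
    · exact ⟨c, mem_mergeC.mpr (Or.inr ⟨hc, h1, h2⟩), hi⟩
  · intro c hc d hd hne
    rcases mem_mergeC.mp hc with rfl | ⟨hcC, hca, hcb⟩ <;>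
      rcases mem_mergeC.mp hd with rfl | ⟨hdC, hda, hdb⟩
    · exact absurd rfl hne
    · exact Finset.disjoint_union_left.mpr
        ⟨hC.2.1 a ha d hdC (Ne.symm hda), hC.2.1 b hb d hdC (Ne.symm hdb)⟩
    · exact (Finset.disjoint_union_left.mpr
        ⟨hC.2.1 a ha c hcC (Ne.symm hca), hC.2.1 b hb c hcC (Ne.symm hcb)⟩).symm
    · exact hC.2.1 c hcC d hdC hne
  · intro c hc
    rcases mem_mergeC.mp hc with rfl | ⟨hcC, -, -⟩
    · obtain ⟨x, hx⟩ := hC.2.2 a ha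
      exact ⟨x, Finset.mem_union_left b hx⟩
    · exact hC.2.2 c hcC

lemma merge_card (hC : IsPartition C) (ha : a ∈ C) (hb : b ∈ C) (hab : a ≠ b) :
    (mergeC C a b).card = C.card - 1 := by
  have hbe : b ∈ C.erase a := Finset.mem_erase.mpr ⟨Ne.symm hab, hb⟩
  have hnot : a ∪ b ∉ (C.erase a).erase b := by
    intro h
    exact union_notMem hC ha hb hab (Finset.mem_of_mem_erase (Finset.mem_of_mem_erase h))
  have h2 : 2 ≤ C.card := Finset.one_lt_card.mpr ⟨a, ha, b, hb, hab⟩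
  rw [mergeC, Finset.card_insert_of_notMem hnot, Finset.card_erase_of_mem hbe,
    Finset.card_erase_of_mem ha]
  omega

lemma clusterOf_merge_left (hC : IsPartition C) (ha : a ∈ C) (hb : b ∈ C) (hab : a ≠ b)
    {i : Fin n} (hi : i ∈ a) : clusterOf (mergeC C a b) i = a ∪ b :=
  clusterOf_eq_of_mem (merge_isPartition hC ha hb hab) (mem_mergeC.mpr (Or.inl rfl))
    (Finset.mem_union_left b hi)

lemma clusterOf_merge_right (hC : IsPartition C) (ha : a ∈ C) (hb : b ∈ C) (hab : a ≠ b)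
    {i : Fin n} (hi : i ∈ b) : clusterOf (mergeC C a b) i = a ∪ b :=
  clusterOf_eq_of_mem (merge_isPartition hC ha hb hab) (mem_mergeC.mpr (Or.inl rfl))
    (Finset.mem_union_right a hi)

lemma clusterOf_merge_other (hC : IsPartition C) (ha : a ∈ C) (hb : b ∈ C) (hab : a ≠ b)
    {i : Fin n} (h1 : clusterOf C i ≠ a) (h2 : clusterOf C i ≠ b) :
    clusterOf (mergeC C a b) i = clusterOf C i :=
  clusterOf_eq_of_mem (merge_isPartition hC ha hb hab)
    (mem_mergeC.mpr (Or.inr ⟨(clusterOf_mem hC i).1, h1, h2⟩)) (clusterOf_mem hC i).2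

lemma clusterOf_merge_coarsen (hC : IsPartition C) (ha : a ∈ C) (hb : b ∈ C) (hab : a ≠ b)
    {i j : Fin n} (hij : clusterOf C i = clusterOf C j) :
    clusterOf (mergeC C a b) i = clusterOf (mergeC C a b) j := by
  by_cases h1 : clusterOf C i = a
  · have hi : i ∈ a := h1 ▸ (clusterOf_mem hC i).2
    have hj : j ∈ a := (hij ▸ h1 : clusterOf C j = a) ▸ (clusterOf_mem hC j).2
    rw [clusterOf_merge_left hC ha hb hab hi, clusterOf_merge_left hC ha hb hab hj]
  by_cases h2 : clusterOf C i = b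
  · have hi : i ∈ b := h2 ▸ (clusterOf_mem hC i).2
    have hj : j ∈ b := (hij ▸ h2 : clusterOf C j = b) ▸ (clusterOf_mem hC j).2
    rw [clusterOf_merge_right hC ha hb hab hi, clusterOf_merge_right hC ha hb hab hj]
  · rw [clusterOf_merge_other hC ha hb hab h1 h2,
      clusterOf_merge_other hC ha hb hab (hij ▸ h1) (hij ▸ h2), hij]

lemma clusterOf_merge_cases (hC : IsPartition C) (ha : a ∈ C) (hb : b ∈ C) (hab : a ≠ b)
    (i : Fin n) :
    (clusterOf (mergeC C a b) i = a ∪ b ∧ (clusterOf C i = a ∨ clusterOf C i = b)) ∨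
    (clusterOf (mergeC C a b) i = clusterOf C i ∧ clusterOf C i ≠ a ∧ clusterOf C i ≠ b) := by
  by_cases h1 : clusterOf C i = a
  · exact Or.inl ⟨clusterOf_merge_left hC ha hb hab (h1 ▸ (clusterOf_mem hC i).2), Or.inl h1⟩
  by_cases h2 : clusterOf C i = b
  · exact Or.inl ⟨clusterOf_merge_right hC ha hb hab (h2 ▸ (clusterOf_mem hC i).2), Or.inr h2⟩
  · exact Or.inr ⟨clusterOf_merge_other hC ha hb hab h1 h2, h1, h2⟩

lemma interPairs_merge_subset (hC : IsPartition C) (ha : a ∈ C) (hb : b ∈ C) (hab : a ≠ b)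
    (s : Fin n → Fin n → ℝ) : interPairs s (mergeC C a b) ⊆ interPairs s C := by
  intro m hm
  simp only [interPairs, Finset.mem_image, Finset.mem_filter, Finset.mem_univ, true_and] at *
  obtain ⟨p, hp, rfl⟩ := hm
  exact ⟨p, fun h => hp (clusterOf_merge_coarsen hC ha hb hab h), rfl⟩

lemma slStep_eq {s : Fin n → Fin n → ℝ} {x : ℝ} {i j : Fin n}
    (hm : (interPairs s C).max = some (toLex (x, toLex (i, j)))) :
    slStep s C = mergeC C (clusterOf C i) (clusterOf C j) := by
  simp [slStep, hm, mergeC]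

def C0 (n : ℕ) : Finset (Finset (Fin n)) := Finset.univ.image fun i => ({i} : Finset (Fin n))

lemma C0_isPartition : IsPartition (C0 n) := by
  refine ⟨fun i => ⟨{i}, Finset.mem_image_of_mem _ (Finset.mem_univ i),
    Finset.mem_singleton_self i⟩, ?_, ?_⟩
  · intro c hc d hd hne
    simp only [C0, Finset.mem_image] at hc hd
    obtain ⟨i, -, rfl⟩ := hc
    obtain ⟨j, -, rfl⟩ := hd
    simp only [Finset.disjoint_singleton]
    exact fun h => hne (by rw [h])
  · intro c hc
    simp only [C0, Finset.mem_image] at hc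
    obtain ⟨i, -, rfl⟩ := hc
    exact ⟨i, Finset.mem_singleton_self i⟩

lemma clusterOf_C0 (i : Fin n) : clusterOf (C0 n) i = {i} :=
  clusterOf_eq_of_mem C0_isPartition (Finset.mem_image_of_mem _ (Finset.mem_univ i))
    (Finset.mem_singleton_self i)

lemma C0_card : (C0 n).card = n := by
  rw [C0, Finset.card_image_of_injective _ (fun i j h => Finset.singleton_injective h)]
  simp

lemma sRun_spec (s : Fin n → Fin n → ℝ) :
    ∀ t : ℕ, t + 1 ≤ n →
    ∃ E : Finset (Fin n × Fin n),
      IsPartition ((slStep s)^[t] (C0 n)) ∧ ((slStep s)^[t] (C0 n)).card = n - t ∧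
      (∀ p ∈ E, p.1 ≠ p.2 ∧
        clusterOf ((slStep s)^[t] (C0 n)) p.1 = clusterOf ((slStep s)^[t] (C0 n)) p.2 ∧
        ∀ m ∈ interPairs s ((slStep s)^[t] (C0 n)), m ≤ toLex (s p.1 p.2, toLex p)) ∧
      (∀ i j : Fin n,
        clusterOf ((slStep s)^[t] (C0 n)) i = clusterOf ((slStep s)^[t] (C0 n)) j →
        Relation.ReflTransGen (fun a b => (a, b) ∈ E ∨ (b, a) ∈ E) i j) := by
  intro t
  induction t with
  | zero =>
    intro _
    refine ⟨∅, by simpa using C0_isPartition, by simpa using C0_card, by simp, ?_⟩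
    intro i j hij
    simp only [Function.iterate_zero_apply, clusterOf_C0] at hij
    rw [Finset.singleton_injective hij]
  | succ t ih =>
    intro ht
    obtain ⟨E, hCp, hCc, hEp, hEc⟩ := ih (by omega)
    set C : Finset (Finset (Fin n)) := (slStep s)^[t] (C0 n) with hCdef
    have h2 : 1 < C.card := by omega
    obtain ⟨a, ha, b, hb, hab⟩ := Finset.one_lt_card.mp h2
    obtain ⟨x, hx⟩ := hCp.2.2 a ha
    obtain ⟨y, hy⟩ := hCp.2.2 b hb
    have hxy : clusterOf C x ≠ clusterOf C y := by
      rw [clusterOf_eq_of_mem hCp ha hx, clusterOf_eq_of_mem hCp hb hy]; exact hab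
    have hne : (interPairs s C).Nonempty :=
      ⟨toLex (s x y, toLex (x, y)), mem_interPairs.mpr ⟨(x, y), hxy, rfl⟩⟩
    obtain ⟨m, hmax⟩ := Finset.max_of_nonempty hne
    obtain ⟨q, hq, heq⟩ := mem_interPairs.mp (Finset.mem_of_max hmax)
    rw [← heq] at hmax
    have hA := (clusterOf_mem hCp q.1).1
    have hB := (clusterOf_mem hCp q.2).1
    have hit : (slStep s)^[t + 1] (C0 n) = mergeC C (clusterOf C q.1) (clusterOf C q.2) := by
      rw [Function.iterate_succ_apply', ← hCdef]
      exact slStep_eq hmax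
    rw [hit]
    have hCp' := merge_isPartition hCp hA hB hq
    refine ⟨insert q E, hCp', ?_, ?_, ?_⟩
    · rw [merge_card hCp hA hB hq, hCc]; omega
    · intro p hp
      rcases Finset.mem_insert.mp hp with rfl | hpE
      · refine ⟨fun h => hq (congrArg _ h), ?_, ?_⟩
        · rw [clusterOf_merge_left hCp hA hB hq (clusterOf_mem hCp p.1).2,
            clusterOf_merge_right hCp hA hB hq (clusterOf_mem hCp p.2).2]
        · intro m' hm'
          exact Finset.le_max_of_eq (interPairs_merge_subset hCp hA hB hq s hm') hmax
      · obtain ⟨h1, h2', h3⟩ := hEp p hpE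
        refine ⟨h1, clusterOf_merge_coarsen hCp hA hB hq h2', ?_⟩
        intro m' hm'
        exact h3 m' (interPairs_merge_subset hCp hA hB hq s hm')
    · intro i j hij
      have hsym : Symmetric (fun a b : Fin n => (a, b) ∈ insert q E ∨ (b, a) ∈ insert q E) :=
        fun a b h => h.symm
      have hmono : ∀ {u v : Fin n},
          Relation.ReflTransGen (fun a b => (a, b) ∈ E ∨ (b, a) ∈ E) u v →
          Relation.ReflTransGen (fun a b => (a, b) ∈ insert q E ∨ (b, a) ∈ insert q E) u v :=
        fun h => Relation.ReflTransGen.mono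
          (fun a b (hh : (a, b) ∈ E ∨ (b, a) ∈ E) => hh.imp Finset.mem_insert_of_mem Finset.mem_insert_of_mem) _ _ h
      have hedge : Relation.ReflTransGen
          (fun a b : Fin n => (a, b) ∈ insert q E ∨ (b, a) ∈ insert q E) q.1 q.2 :=
        Relation.ReflTransGen.single (Or.inl (Finset.mem_insert_self q E))
      have hto : ∀ u : Fin n,
          clusterOf C u = clusterOf C q.1 ∨ clusterOf C u = clusterOf C q.2 →
          Relation.ReflTransGen
            (fun a b : Fin n => (a, b) ∈ insert q E ∨ (b, a) ∈ insert q E) u q.2 := by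
        intro u hu
        rcases hu with h | h
        · exact (hmono (hEc u q.1 h)).trans hedge
        · exact hmono (hEc u q.2 h)
      rcases clusterOf_merge_cases hCp hA hB hq i with ⟨hi', hiAB⟩ | ⟨hi', hia, hib⟩ <;>
        rcases clusterOf_merge_cases hCp hA hB hq j with ⟨hj', hjAB⟩ | ⟨hj', hja, hjb⟩
      · exact (hto i hiAB).trans (by haveI : Std.Symm (fun a b : Fin n => (a, b) ∈ insert q E ∨ (b, a) ∈ insert q E) := ⟨fun a b h => hsym h⟩; exact Std.Symm.symm _ _ (hto j hjAB))
      · exfalso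
        rw [hi', hj'] at hij
        exact union_notMem hCp hA hB hq (hij ▸ (clusterOf_mem hCp j).1)
      · exfalso
        rw [hi', hj'] at hij
        exact union_notMem hCp hA hB hq (hij.symm ▸ (clusterOf_mem hCp i).1)
      · rw [hi', hj'] at hij
        exact hmono (hEc i j hij)

lemma partition_eq_of_same {D Γ : Finset (Finset (Fin n))}
    (hD : IsPartition D) (hΓ : IsPartition Γ)
    (h1 : ∀ i j, clusterOf D i = clusterOf D j → clusterOf Γ i = clusterOf Γ j)
    (h2 : ∀ i j, clusterOf Γ i = clusterOf Γ j → clusterOf D i = clusterOf D j) :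
    D = Γ := by
  have hpt : ∀ i, clusterOf D i = clusterOf Γ i := by
    intro i
    ext x
    rw [mem_clusterOf_iff hD, mem_clusterOf_iff hΓ]
    exact ⟨h1 x i, h2 x i⟩
  ext c
  constructor
  · intro hc
    obtain ⟨x, hx⟩ := hD.2.2 c hc
    have : clusterOf D x = c := clusterOf_eq_of_mem hD hc hx
    rw [← this, hpt]
    exact (clusterOf_mem hΓ x).1
  · intro hc
    obtain ⟨x, hx⟩ := hΓ.2.2 c hc
    have : clusterOf Γ x = c := clusterOf_eq_of_mem hΓ hc hx
    rw [← this, ← hpt]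
    exact (clusterOf_mem hD x).1

lemma refine_eq {D Γ : Finset (Finset (Fin n))}
    (hD : IsPartition D) (hΓ : IsPartition Γ)
    (href : ∀ i j, clusterOf D i = clusterOf D j → clusterOf Γ i = clusterOf Γ j)
    (hcard : D.card ≤ Γ.card) : D = Γ := by
  classical
  set F : Finset (Fin n) → Finset (Finset (Fin n)) :=
    fun g => D.filter (fun d => d ⊆ g) with hF
  have hclg : ∀ (x : Fin n) (g : Finset (Fin n)), g ∈ Γ → x ∈ g → clusterOf D x ∈ F g := by
    intro x g hg hx
    refine Finset.mem_filter.mpr ⟨(clusterOf_mem hD x).1, ?_⟩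
    intro y hy
    have h := href y x ((mem_clusterOf_iff hD).mp hy)
    have : y ∈ clusterOf Γ x := (mem_clusterOf_iff hΓ).mpr h
    rwa [clusterOf_eq_of_mem hΓ hg hx] at this
  have hDbi : D = Γ.biUnion F := by
    ext d
    constructor
    · intro hd
      obtain ⟨x, hx⟩ := hD.2.2 d hd
      have hdx : clusterOf D x = d := clusterOf_eq_of_mem hD hd hx
      refine Finset.mem_biUnion.mpr ⟨clusterOf Γ x, (clusterOf_mem hΓ x).1, ?_⟩
      rw [← hdx]
      exact hclg x _ (clusterOf_mem hΓ x).1 (clusterOf_mem hΓ x).2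
    · intro hd
      obtain ⟨g, -, hdg⟩ := Finset.mem_biUnion.mp hd
      exact (Finset.mem_filter.mp hdg).1
  have hdisj : ∀ g ∈ Γ, ∀ g' ∈ Γ, g ≠ g' → Disjoint (F g) (F g') := by
    intro g hg g' hg' hne
    rw [Finset.disjoint_left]
    intro d hdg hdg'
    obtain ⟨hdD, hsg⟩ := Finset.mem_filter.mp hdg
    obtain ⟨-, hsg'⟩ := Finset.mem_filter.mp hdg'
    obtain ⟨x, hx⟩ := hD.2.2 d hdD
    exact (Finset.disjoint_left.mp (hΓ.2.1 g hg g' hg' hne) (hsg hx)) (hsg' hx)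
  have hsum : D.card = ∑ g ∈ Γ, (F g).card := by
    rw [hDbi]
    exact Finset.card_biUnion hdisj
  have hge : ∀ g ∈ Γ, 1 ≤ (F g).card := by
    intro g hg
    obtain ⟨x, hx⟩ := hΓ.2.2 g hg
    exact Finset.card_pos.mpr ⟨clusterOf D x, hclg x g hg hx⟩
  have heq1 : ∀ g ∈ Γ, (F g).card = 1 := by
    by_contra hno
    push_neg at hno
    obtain ⟨g0, hg0, hg0c⟩ := hno
    have hlt : ∑ g ∈ Γ, 1 < ∑ g ∈ Γ, (F g).card := by
      refine Finset.sum_lt_sum (fun g hg => hge g hg) ⟨g0, hg0, ?_⟩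
      have := hge g0 hg0
      omega
    rw [← Finset.card_eq_sum_ones, ← hsum] at hlt
    omega
  have hΓD : Γ ⊆ D := by
    intro g hg
    obtain ⟨d, hdF⟩ := Finset.card_eq_one.mp (heq1 g hg)
    have hdg : d ∈ F g := hdF ▸ Finset.mem_singleton_self d
    obtain ⟨hdD, hdsub⟩ := Finset.mem_filter.mp hdg
    have hgd : g ⊆ d := by
      intro x hx
      have := hclg x g hg hx
      rw [hdF, Finset.mem_singleton] at this
      rw [← this]
      exact (clusterOf_mem hD x).2
    rwa [Finset.Subset.antisymm hgd hdsub]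
  exact (Finset.eq_of_subset_of_card_le hΓD hcard).symm

lemma exists_cross {β : Type} {R : Fin n → Fin n → Prop} {f : Fin n → β} {i j : Fin n}
    (hpath : Relation.ReflTransGen R i j) : f i ≠ f j → ∃ a b, R a b ∧ f a ≠ f b := by
  induction hpath with
  | refl => intro h; exact absurd rfl h
  | @tail b c h1 h2 ih =>
    intro hne
    by_cases hb : f i = f b
    · exact ⟨b, c, h2, fun h => hne (hb.trans h)⟩
    · exact ih hb

end SLProof

open SLProof in
/-- Single-Linkage satisfies Consistency: if `s'` is a `SL s k`-transformation
of `s`, then `SL s' k = SL s k`. -/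
theorem SL_consistent {n : ℕ} (s s' : Fin n → Fin n → ℝ) (hs : Sim s) (hs' : Sim s')
    (k : ℕ) (hk1 : 1 ≤ k) (hkn : k ≤ n)
    (hin : ∀ i j, i ≠ j → SameCluster (SL s k) i j → s i j ≤ s' i j)
    (hout : ∀ i j, i ≠ j → ¬ SameCluster (SL s k) i j → s' i j ≤ s i j) :
    SL s' k = SL s k := by
  classical
  have hn1 : 1 ≤ n := le_trans hk1 hkn
  obtain ⟨E, hΓp, hΓc, hE, hconn⟩ := sRun_spec s (n - k) (by omega)
  set Γ : Finset (Finset (Fin n)) := (slStep s)^[n - k] (C0 n) with hΓdef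
  have hSL : SL s k = Γ := rfl
  have hΓc' : Γ.card = k := by rw [hΓc]; omega
  have hin' : ∀ p : Fin n × Fin n, p.1 ≠ p.2 → clusterOf Γ p.1 = clusterOf Γ p.2 →
      s p.1 p.2 ≤ s' p.1 p.2 := by
    intro p h1 h2
    exact hin p.1 p.2 h1 (by rw [hSL]; exact (sameCluster_iff hΓp).mpr h2)
  have hout' : ∀ p : Fin n × Fin n, p.1 ≠ p.2 → clusterOf Γ p.1 ≠ clusterOf Γ p.2 →
      s' p.1 p.2 ≤ s p.1 p.2 := by
    intro p h1 h2
    refine hout p.1 p.2 h1 (fun hsc => h2 ?_)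
    rw [hSL] at hsc
    exact (sameCluster_iff hΓp).mp hsc
  -- the s'-run
  have key : ∀ t : ℕ, t ≤ n - k →
      IsPartition ((slStep s')^[t] (C0 n)) ∧ ((slStep s')^[t] (C0 n)).card = n - t ∧
      (∀ i j : Fin n,
        clusterOf ((slStep s')^[t] (C0 n)) i = clusterOf ((slStep s')^[t] (C0 n)) j →
        clusterOf Γ i = clusterOf Γ j) := by
    intro t
    induction t with
    | zero =>
      intro _
      refine ⟨by simpa using C0_isPartition, by simpa using C0_card, ?_⟩
      intro i j hij
      simp only [Function.iterate_zero_apply, clusterOf_C0] at hij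
      rw [Finset.singleton_injective hij]
    | succ t ih =>
      intro ht
      obtain ⟨hDp, hDc, href⟩ := ih (by omega)
      set D : Finset (Finset (Fin n)) := (slStep s')^[t] (C0 n) with hDdef
      -- find a pair in the same Γ-cluster but different D-clusters
      have hsplit : ∃ i j : Fin n,
          clusterOf Γ i = clusterOf Γ j ∧ clusterOf D i ≠ clusterOf D j := by
        by_contra hno
        push_neg at hno
        have hDΓ : D = Γ := partition_eq_of_same hDp hΓp href hno
        rw [hDΓ, hΓc'] at hDc
        omega
      obtain ⟨i, j, hΓij, hDij⟩ := hsplit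
      obtain ⟨u, v, hR, huv⟩ := exists_cross (f := clusterOf D) (hconn i j hΓij) hDij
      obtain ⟨p, hpE, hpD⟩ : ∃ p ∈ E, clusterOf D p.1 ≠ clusterOf D p.2 := by
        rcases hR with h | h
        exacts [⟨(u, v), h, huv⟩, ⟨(v, u), h, Ne.symm huv⟩]
      obtain ⟨hp12, hpΓ, hpdom⟩ := hE p hpE
      have hne' : (interPairs s' D).Nonempty :=
        ⟨toLex (s' p.1 p.2, toLex p), mem_interPairs.mpr ⟨p, hpD, rfl⟩⟩
      obtain ⟨m', hmax⟩ := Finset.max_of_nonempty hne'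
      obtain ⟨q, hqD, heq⟩ := mem_interPairs.mp (Finset.mem_of_max hmax)
      rw [← heq] at hmax
      have hqΓ : clusterOf Γ q.1 = clusterOf Γ q.2 := by
        by_contra hqΓ
        have hq12 : q.1 ≠ q.2 := fun h => hqD (congrArg _ h)
        have h1 : s' q.1 q.2 ≤ s q.1 q.2 := hout' q hq12 hqΓ
        have h2 : toLex ((s q.1 q.2 : ℝ), toLex q) ≤ toLex (s p.1 p.2, toLex p) :=
          hpdom _ (mem_interPairs.mpr ⟨q, hqΓ, rfl⟩)
        have h3 : s p.1 p.2 ≤ s' p.1 p.2 := hin' p hp12 hpΓ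
        have h4 : toLex ((s' p.1 p.2 : ℝ), toLex p) ≤ toLex (s' q.1 q.2, toLex q) :=
          Finset.le_max_of_eq (mem_interPairs.mpr ⟨p, hpD, rfl⟩) hmax
        have e2 := Prod.Lex.le_iff.mp h2
        have e4 := Prod.Lex.le_iff.mp h4
        have hsq : s q.1 q.2 ≤ s p.1 p.2 := by
          rcases e2 with h | ⟨h, -⟩
          · exact le_of_lt h
          · exact le_of_eq h
        have hs'p : s' p.1 p.2 ≤ s' q.1 q.2 := by
          rcases e4 with h | ⟨h, -⟩
          · exact le_of_lt h
          · exact le_of_eq h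
        have hA : s' p.1 p.2 = s' q.1 q.2 :=
          le_antisymm hs'p (le_trans h1 (hsq.trans h3))
        have hB : s q.1 q.2 = s p.1 p.2 :=
          le_antisymm hsq (h3.trans (hA.le.trans h1))
        have hqp : toLex q ≤ toLex p := by
          rcases e2 with h | ⟨-, h⟩
          · exact absurd h (by simp [hB])
          · exact h
        have hpq : toLex p ≤ toLex q := by
          rcases e4 with h | ⟨-, h⟩
          · exact absurd h (by simp [hA])
          · exact h
        have hpqeq : p = q := toLex.injective (le_antisymm hpq hqp)
        exact hqΓ (by rw [← hpqeq]; exact hpΓ)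
      have hA' := (clusterOf_mem hDp q.1).1
      have hB' := (clusterOf_mem hDp q.2).1
      have hit : (slStep s')^[t + 1] (C0 n) =
          mergeC D (clusterOf D q.1) (clusterOf D q.2) := by
        rw [Function.iterate_succ_apply', ← hDdef]
        exact slStep_eq hmax
      rw [hit]
      refine ⟨merge_isPartition hDp hA' hB' hqD, ?_, ?_⟩
      · rw [merge_card hDp hA' hB' hqD, hDc]; omega
      · intro i' j' hij'
        have keyu : ∀ u : Fin n,
            clusterOf D u = clusterOf D q.1 ∨ clusterOf D u = clusterOf D q.2 →
            clusterOf Γ u = clusterOf Γ q.2 := by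
          intro u hu
          rcases hu with h | h
          · exact (href u q.1 h).trans hqΓ
          · exact href u q.2 h
        rcases clusterOf_merge_cases hDp hA' hB' hqD i' with ⟨hi', hiAB⟩ | ⟨hi', hia, hib⟩ <;>
          rcases clusterOf_merge_cases hDp hA' hB' hqD j' with ⟨hj', hjAB⟩ | ⟨hj', hja, hjb⟩
        · exact (keyu i' hiAB).trans (keyu j' hjAB).symm
        · exfalso
          rw [hi', hj'] at hij'
          exact union_notMem hDp hA' hB' hqD (hij' ▸ (clusterOf_mem hDp j').1)
        · exfalso
          rw [hi', hj'] at hij'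
          exact union_notMem hDp hA' hB' hqD (hij'.symm ▸ (clusterOf_mem hDp i').1)
        · rw [hi', hj'] at hij'
          exact href i' j' hij'
  obtain ⟨hDp, hDc, href⟩ := key (n - k) le_rfl
  have hfin : (slStep s')^[n - k] (C0 n) = Γ := by
    refine refine_eq hDp hΓp href ?_
    rw [hDc, hΓc']
    omega
  show (slStep s')^[n - k] (C0 n) = SL s k
  rw [hfin, hSL]
end
end

section
/- The Max-Sum objective for k = 2 satisfies Consistency: if Γ = {A, S\A} maximizes the sum of within-cluster similarities for s, and s' is a Γ-transformation of s (within-cluster similarities weakly increased, between-cluster similarities weakly decreased), then Γ also maximizes the sum of within-cluster similarities for s'. -/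
noncomputable section

open Finset

/-- The Max-Sum objective of the 2-partitioning `{A, S \ A}`:
the sum of within-cluster similarities. -/
def lam {n : ℕ} (s : Fin n → Fin n → ℝ) (A : Finset (Fin n)) : ℝ :=
  (∑ p ∈ Finset.univ.filter
      (fun p : Fin n × Fin n => p.1 < p.2 ∧ p.1 ∈ A ∧ p.2 ∈ A), s p.1 p.2) +
  (∑ p ∈ Finset.univ.filter
      (fun p : Fin n × Fin n => p.1 < p.2 ∧ p.1 ∉ A ∧ p.2 ∉ A), s p.1 p.2)

/-- `A` determines a Max-Sum optimal 2-partitioning `{A, S \ A}` for `s`. -/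
def IsMaxSum2 {n : ℕ} (s : Fin n → Fin n → ℝ) (A : Finset (Fin n)) : Prop :=
  A.Nonempty ∧ A ≠ Finset.univ ∧
    ∀ B : Finset (Fin n), B.Nonempty → B ≠ Finset.univ → lam s B ≤ lam s A

def pairs {n : ℕ} (B : Finset (Fin n)) : Finset (Fin n × Fin n) :=
  Finset.univ.filter
    (fun p : Fin n × Fin n => p.1 < p.2 ∧ ((p.1 ∈ B ∧ p.2 ∈ B) ∨ (p.1 ∉ B ∧ p.2 ∉ B)))

lemma lam_eq {n : ℕ} (s : Fin n → Fin n → ℝ) (B : Finset (Fin n)) :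
    lam s B = ∑ p ∈ pairs B, s p.1 p.2 := by
  have h : pairs B =
      (Finset.univ.filter (fun p : Fin n × Fin n => p.1 < p.2 ∧ p.1 ∈ B ∧ p.2 ∈ B)) ∪
      (Finset.univ.filter (fun p : Fin n × Fin n => p.1 < p.2 ∧ p.1 ∉ B ∧ p.2 ∉ B)) := by
    ext p; simp [pairs]; tauto
  rw [h, Finset.sum_union]
  · rfl
  · rw [Finset.disjoint_left]
    intro p hp hq
    simp only [Finset.mem_filter] at hp hq
    tauto

/-- Max-Sum for `k = 2` satisfies Consistency: if `{A, S\A}` is optimal for `s`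
and `s'` is a `{A, S\A}`-transformation of `s`, then it is optimal for `s'`. -/
theorem maxSum2_consistent {n : ℕ} (hn : 2 ≤ n)
    (s s' : Fin n → Fin n → ℝ) (hs : Sim s) (hs' : Sim s')
    (A : Finset (Fin n))
    (hin : ∀ i j, i ≠ j → ((i ∈ A ∧ j ∈ A) ∨ (i ∉ A ∧ j ∉ A)) → s i j ≤ s' i j)
    (hout : ∀ i j, i ≠ j → ¬((i ∈ A ∧ j ∈ A) ∨ (i ∉ A ∧ j ∉ A)) → s' i j ≤ s i j)
    (hA : IsMaxSum2 s A) :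
    IsMaxSum2 s' A := by
  obtain ⟨hne, hnu, hmax⟩ := hA
  refine ⟨hne, hnu, ?_⟩
  intro B hBne hBnu
  rw [lam_eq, lam_eq]
  have hBs : lam s B ≤ lam s A := hmax B hBne hBnu
  rw [lam_eq, lam_eq] at hBs
  have hsplit : ∑ p ∈ pairs B, (s' p.1 p.2 - s p.1 p.2)
      ≤ ∑ p ∈ pairs A, (s' p.1 p.2 - s p.1 p.2) := by
    have h1 : pairs B = (pairs B ∩ pairs A) ∪ (pairs B \ pairs A) := by
      ext p; simp only [Finset.mem_union, Finset.mem_inter, Finset.mem_sdiff]; tauto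
    have hd : Disjoint (pairs B ∩ pairs A) (pairs B \ pairs A) := by
      rw [Finset.disjoint_left]
      intro p hp hq
      exact (Finset.mem_sdiff.1 hq).2 (Finset.mem_inter.1 hp).2
    rw [h1, Finset.sum_union hd]
    have h2 : ∑ p ∈ pairs B \ pairs A, (s' p.1 p.2 - s p.1 p.2) ≤ 0 := by
      apply Finset.sum_nonpos
      intro p hp
      rw [Finset.mem_sdiff] at hp
      obtain ⟨hpB, hpA⟩ := hp
      simp only [pairs, Finset.mem_filter] at hpB hpA
      have hlt := hpB.2.1
      have hne' : p.1 ≠ p.2 := ne_of_lt hlt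
      have : ¬((p.1 ∈ A ∧ p.2 ∈ A) ∨ (p.1 ∉ A ∧ p.2 ∉ A)) := by tauto
      linarith [hout p.1 p.2 hne' this]
    have h3 : ∑ p ∈ pairs B ∩ pairs A, (s' p.1 p.2 - s p.1 p.2)
        ≤ ∑ p ∈ pairs A, (s' p.1 p.2 - s p.1 p.2) := by
      apply Finset.sum_le_sum_of_subset_of_nonneg Finset.inter_subset_right
      intro p hp _
      simp only [pairs, Finset.mem_filter] at hp
      have hne' : p.1 ≠ p.2 := ne_of_lt hp.2.1
      linarith [hin p.1 p.2 hne' hp.2.2]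
    linarith
  rw [Finset.sum_sub_distrib, Finset.sum_sub_distrib] at hsplit
  linarith
end
end

section
/- The constant partitioning function (returning the first n−k+1 elements of S as one cluster and the remaining k−1 elements as singletons, regardless of s) satisfies Consistency, Scale-Invariance, MST-Consistency and MCT-Consistency, but for n > k ≥ 2 it does not satisfy k-Richness. -/
noncomputable section

open scoped Classical

open Finset

/-- The graph on `Fin n` whose edges are the pairs in `E`. -/
def graphOf {n : ℕ} (E : Finset (Fin n × Fin n)) : SimpleGraph (Fin n) :=
  SimpleGraph.fromRel (fun i j => (i, j) ∈ E)

/-- `E` is (the canonical edge set of) a spanning tree on `Fin n`: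
each edge is given once as an increasing pair, there are `n - 1` edges,
and the resulting graph is connected. -/
def IsTreeEdges {n : ℕ} (E : Finset (Fin n × Fin n)) : Prop :=
  (∀ p ∈ E, p.1 < p.2) ∧ E.card = n - 1 ∧ (graphOf E).Connected

/-- The total weight of the edge set `E` under the similarity function `s`. -/
def wt {n : ℕ} (s : Fin n → Fin n → ℝ) (E : Finset (Fin n × Fin n)) : ℝ :=
  ∑ p ∈ E, s p.1 p.2

/-- `T` is a maximum spanning tree of the complete weighted graph determined by `s`. -/
def IsMST {n : ℕ} (s : Fin n → Fin n → ℝ) (T : Finset (Fin n × Fin n)) : Prop :=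
  IsTreeEdges T ∧ ∀ T' : Finset (Fin n × Fin n), IsTreeEdges T' → wt s T' ≤ wt s T

/-- The partition of `Fin n` into connected components of the graph with edge set `E`. -/
def components {n : ℕ} (E : Finset (Fin n × Fin n)) : Finset (Finset (Fin n)) :=
  Finset.univ.image fun i => Finset.univ.filter fun j => (graphOf E).Reachable i j

/-- `C` is a minimum-weight `k`-cut of the tree `T` with edge weights given by `w`:
removing `C` leaves exactly `k` connected components, at minimum total weight. -/
def IsMinKCut {n : ℕ} (w : Fin n × Fin n → ℝ) (T C : Finset (Fin n × Fin n))
    (k : ℕ) : Prop :=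
  C ⊆ T ∧ (components (T \ C)).card = k ∧
    ∀ C' ⊆ T, (components (T \ C')).card = k → ∑ p ∈ C, w p ≤ ∑ p ∈ C', w p

/-- The cut value of the set `A` in the weighted graph given by `s`. -/
def cutVal {n : ℕ} (s : Fin n → Fin n → ℝ) (A : Finset (Fin n)) : ℝ :=
  ∑ i ∈ A, ∑ j ∈ Finset.univ \ A, s i j

/-- `A` is a minimum `u`-`v` cut of the complete weighted graph given by `s`. -/
def IsMinUVCut {n : ℕ} (s : Fin n → Fin n → ℝ) (u v : Fin n)
    (A : Finset (Fin n)) : Prop :=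
  u ∈ A ∧ v ∉ A ∧ ∀ B : Finset (Fin n), u ∈ B → v ∉ B → cutVal s A ≤ cutVal s B

/-- The connected component of `i` in the graph with edge set `E`. -/
def compOf {n : ℕ} (E : Finset (Fin n × Fin n)) (i : Fin n) : Finset (Fin n) :=
  Finset.univ.filter fun j => (graphOf E).Reachable i j

/-- `(T, w)` is a minimum cut (Gomory–Hu) tree of `s`: for every tree edge,
the cut obtained by deleting it is a minimum cut between its endpoints, and
`w` records its value. -/
def IsMCT {n : ℕ} (s : Fin n → Fin n → ℝ) (T : Finset (Fin n × Fin n))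
    (w : Fin n × Fin n → ℝ) : Prop :=
  IsTreeEdges T ∧ ∀ p ∈ T,
    IsMinUVCut s p.1 p.2 (compOf (T \ {p}) p.1) ∧
    w p = cutVal s (compOf (T \ {p}) p.1)

/-- Consistency for a partitioning function with a fixed number of clusters. -/
def Consistent {n : ℕ} (F : (Fin n → Fin n → ℝ) → Finset (Finset (Fin n))) : Prop :=
  ∀ s s' : Fin n → Fin n → ℝ, Sim s → Sim s' →
    (∀ i j, i ≠ j → SameCluster (F s) i j → s i j ≤ s' i j) →
    (∀ i j, i ≠ j → ¬ SameCluster (F s) i j → s' i j ≤ s i j) →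
    F s' = F s

/-- Scale-Invariance. -/
def ScaleInvariant {n : ℕ} (F : (Fin n → Fin n → ℝ) → Finset (Finset (Fin n))) : Prop :=
  ∀ s : Fin n → Fin n → ℝ, Sim s → ∀ α : ℝ, 0 < α → F (fun i j => α * s i j) = F s

/-- MST-Consistency. -/
def MSTConsistent {n : ℕ} (k : ℕ)
    (F : (Fin n → Fin n → ℝ) → Finset (Finset (Fin n))) : Prop :=
  ∀ s s' : Fin n → Fin n → ℝ, Sim s → Sim s' →
    (∃ T T' C C' : Finset (Fin n × Fin n),
      IsMST s T ∧ IsMST s' T' ∧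
      IsMinKCut (fun p => s p.1 p.2) T C k ∧ IsMinKCut (fun p => s' p.1 p.2) T' C' k ∧
      components (T \ C) = components (T' \ C')) →
    F s = F s'

/-- MCT-Consistency: agreement whenever the minimum cut trees of `s` and `s'`
have the same minimum `k`-cut partition. -/
def MCTConsistent {n : ℕ} (k : ℕ)
    (F : (Fin n → Fin n → ℝ) → Finset (Finset (Fin n))) : Prop :=
  ∀ s s' : Fin n → Fin n → ℝ, Sim s → Sim s' →
    (∃ (T T' C C' : Finset (Fin n × Fin n)) (w w' : Fin n × Fin n → ℝ),
      IsMCT s T w ∧ IsMCT s' T' w' ∧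
      IsMinKCut w T C k ∧ IsMinKCut w' T' C' k ∧
      components (T \ C) = components (T' \ C')) →
    F s = F s'

/-- k-Richness. -/
def KRich {n : ℕ} (k : ℕ) (F : (Fin n → Fin n → ℝ) → Finset (Finset (Fin n))) : Prop :=
  ∀ Γ : Finset (Finset (Fin n)), IsKPartition Γ k →
    ∃ s : Fin n → Fin n → ℝ, Sim s ∧ F s = Γ

/-- The constant partitioning function: the first `n - k + 1` points form one
cluster and the remaining `k - 1` points are singletons, regardless of `s`. -/
def constPart (n k : ℕ) : Finset (Finset (Fin n)) :=
  insert (Finset.univ.filter fun i : Fin n => (i : ℕ) < n - k + 1)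
    ((Finset.univ.filter fun i : Fin n => n - k + 1 ≤ (i : ℕ)).image
      fun i => ({i} : Finset (Fin n)))

/-- The constant partitioning function is Consistent, Scale-Invariant,
MST-Consistent and MCT-Consistent, but (for `n > k ≥ 2`) not k-Rich. -/
theorem constPart_properties {n k : ℕ} (hk : 2 ≤ k) (hkn : k < n) :
    Consistent (fun _ : Fin n → Fin n → ℝ => constPart n k) ∧
    ScaleInvariant (fun _ : Fin n → Fin n → ℝ => constPart n k) ∧
    MSTConsistent k (fun _ : Fin n → Fin n → ℝ => constPart n k) ∧
    MCTConsistent k (fun _ : Fin n → Fin n → ℝ => constPart n k) ∧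
    ¬ KRich k (fun _ : Fin n → Fin n → ℝ => constPart n k) := by
  have hn3 : 3 ≤ n := lt_of_le_of_lt hk hkn
  have hm : k - 1 < n := lt_of_le_of_lt (Nat.sub_le _ _) hkn
  have hm1 : 1 ≤ k - 1 := Nat.le_sub_one_of_lt hk
  have hbigc : 2 ≤ n - (k - 1) := by omega
  refine ⟨fun _ _ _ _ _ _ => rfl, fun _ _ _ _ => rfl, fun _ _ _ _ _ => rfl,
    fun _ _ _ _ _ => rfl, ?_⟩
  intro hrich
  set m := k - 1 with hmdef
  set big : Finset (Fin n) := Finset.univ.filter fun i : Fin n => m ≤ (i : ℕ) with hbig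
  set small : Finset (Fin n) := Finset.univ.filter fun i : Fin n => (i : ℕ) < m with hsmall
  have hbigIci : big = Finset.Ici (⟨m, hm⟩ : Fin n) := by
    ext i; simp [hbig, Fin.le_def]
  have hsmallIio : small = Finset.Iio (⟨m, hm⟩ : Fin n) := by
    ext i; simp [hsmall, Fin.lt_def]
  have hbigcard : big.card = n - m := by rw [hbigIci, Fin.card_Ici]
  have hsmallcard : small.card = m := by rw [hsmallIio, Fin.card_Iio]
  set Γ : Finset (Finset (Fin n)) :=
    insert big (small.image fun i => ({i} : Finset (Fin n))) with hΓ
  have hsing : ∀ c ∈ small.image fun i => ({i} : Finset (Fin n)), c.card = 1 := by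
    intro c hc
    obtain ⟨i, _, rfl⟩ := Finset.mem_image.mp hc
    simp
  have hbignot : big ∉ small.image fun i => ({i} : Finset (Fin n)) := by
    intro h
    have := hsing big h
    omega
  have hΓpart : IsKPartition Γ k := by
    refine ⟨?_, ?_, ?_, ?_⟩
    · rw [hΓ, Finset.card_insert_of_notMem hbignot,
        Finset.card_image_of_injective _ (fun a b h => by
          simpa using Finset.singleton_injective h), hsmallcard]
      omega
    · intro c hc
      rcases Finset.mem_insert.mp hc with rfl | hc
      · exact ⟨⟨m, hm⟩, by simp [hbig]⟩
      · obtain ⟨i, _, rfl⟩ := Finset.mem_image.mp hc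
        exact ⟨i, by simp⟩
    · intro c hc c' hc' hne
      rcases Finset.mem_insert.mp hc with rfl | hc <;>
        rcases Finset.mem_insert.mp hc' with rfl | hc'
      · exact absurd rfl hne
      · obtain ⟨i, hi, rfl⟩ := Finset.mem_image.mp hc'
        simp only [Finset.mem_filter, Finset.mem_univ, true_and, hsmall] at hi
        rw [Finset.disjoint_singleton_right]
        simp [hbig]; omega
      · obtain ⟨i, hi, rfl⟩ := Finset.mem_image.mp hc
        simp only [Finset.mem_filter, Finset.mem_univ, true_and, hsmall] at hi
        rw [Finset.disjoint_singleton_left]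
        simp [hbig]; omega
      · obtain ⟨i, _, rfl⟩ := Finset.mem_image.mp hc
        obtain ⟨j, _, rfl⟩ := Finset.mem_image.mp hc'
        have : i ≠ j := fun h => hne (by rw [h])
        simp only [Finset.disjoint_singleton_left, Finset.mem_singleton]
        exact this
    · apply Finset.eq_univ_of_forall
      intro j
      rw [Finset.mem_sup]
      by_cases hj : (j : ℕ) < m
      · exact ⟨{j}, Finset.mem_insert_of_mem (Finset.mem_image.mpr
          ⟨j, by simp [hsmall, hj], rfl⟩), by simp⟩
      · exact ⟨big, Finset.mem_insert_self _ _, by simp [hbig]; omega⟩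
  obtain ⟨s, _, hFs⟩ := hrich Γ hΓpart
  -- hFs : constPart n k = Γ
  have hn0 : 0 < n := by omega
  have hn1 : 1 < n := by omega
  set z : Fin n := ⟨0, hn0⟩ with hz
  set o : Fin n := ⟨1, hn1⟩ with ho
  have h0Γ : ({z} : Finset (Fin n)) ∈ Γ := by
    refine Finset.mem_insert_of_mem (Finset.mem_image.mpr ⟨z, ?_, rfl⟩)
    simp only [hsmall, Finset.mem_filter, Finset.mem_univ, true_and, hz]
    omega
  rw [← hFs] at h0Γ
  have h2 : 2 ≤ n - k + 1 := by omega
  rcases Finset.mem_insert.mp h0Γ with heq | hmem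
  · have h0 : z ∈ Finset.univ.filter fun i : Fin n => (i : ℕ) < n - k + 1 := by
      simp only [Finset.mem_filter, Finset.mem_univ, true_and, hz]; omega
    have h1 : o ∈ Finset.univ.filter fun i : Fin n => (i : ℕ) < n - k + 1 := by
      simp only [Finset.mem_filter, Finset.mem_univ, true_and, ho]; omega
    rw [← heq] at h0 h1
    have e0 : o = z := Finset.mem_singleton.mp h1
    have : (1 : ℕ) = 0 := congrArg Fin.val e0
    omega
  · obtain ⟨i, hi, hie⟩ := Finset.mem_image.mp hmem
    simp only [Finset.mem_filter, Finset.mem_univ, true_and] at hi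
    have : i = z := Finset.singleton_injective hie
    subst this
    simp only [hz] at hi
    omega
end
end

section
/- In any maximum spanning tree T of a complete weighted graph G on S, for every pair of vertices u, v, the minimum-weight edge on the unique path in T from u to v has weight equal to the maximum over all u–v paths in G of the minimum edge weight along the path (the widest-path/maximum-bottleneck property). -/
noncomputable section

open scoped Classical

open Finset

/-- The bottleneck of a walk: the minimum similarity among its edges. -/
def bottleneck {n : ℕ} (s : Fin n → Fin n → ℝ) {G : SimpleGraph (Fin n)}
    {u v : Fin n} (W : G.Walk u v) : WithBot ℝ :=
  (W.darts.map fun d => s d.toProd.1 d.toProd.2).minimum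

namespace MSTAux

open SimpleGraph

variable {n : ℕ}

lemma graphOf_adj {E : Finset (Fin n × Fin n)} {x y : Fin n} :
    (graphOf E).Adj x y ↔ x ≠ y ∧ ((x, y) ∈ E ∨ (y, x) ∈ E) := by
  simp [graphOf, SimpleGraph.fromRel_adj]

lemma graphOf_mono {E F : Finset (Fin n × Fin n)} (h : E ⊆ F) : graphOf E ≤ graphOf F := by
  intro x y hxy
  rw [graphOf_adj] at hxy ⊢
  exact ⟨hxy.1, hxy.2.imp (fun h' => h h') (fun h' => h h')⟩

lemma minimum_withbot (l : List ℝ) (hl : l ≠ []) :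
    ∃ m : ℝ, m ∈ l ∧ (l.minimum : WithBot ℝ) = (m : WithBot ℝ) ∧ ∀ a ∈ l, m ≤ a := by
  have h1 : l.minimum ≠ ⊤ := List.minimum_ne_top_of_ne_nil hl
  obtain ⟨m, hm⟩ := WithTop.ne_top_iff_exists.mp h1
  rw [eq_comm, List.minimum_eq_coe_iff] at hm
  refine ⟨m, hm.1, ?_, hm.2⟩
  have h2 : l.minimum = (m : WithTop ℝ) := List.minimum_eq_coe_iff.mpr hm
  exact h2

/-- The edge finset of `graphOf E` is the image of `E`, when `E` consists of
increasing pairs. -/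
lemma card_graphOf {E : Finset (Fin n × Fin n)} (hE : ∀ p ∈ E, p.1 < p.2) :
    (graphOf E).edgeFinset.card = E.card := by
  have himg : (graphOf E).edgeFinset = E.image (fun p => s(p.1, p.2)) := by
    ext e
    induction e with
    | _ x y =>
      simp only [mem_edgeFinset, mem_edgeSet, graphOf_adj, Finset.mem_image]
      constructor
      · rintro ⟨hxy, h | h⟩
        · exact ⟨(x, y), h, rfl⟩
        · exact ⟨(y, x), h, Sym2.eq_swap⟩
      · rintro ⟨p, hp, he⟩
        have hlt := hE p hp
        rw [Sym2.eq_iff] at he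
        rcases he with ⟨h1, h2⟩ | ⟨h1, h2⟩
        · subst h1; subst h2
          exact ⟨hlt.ne, Or.inl (by simpa using hp)⟩
        · subst h1; subst h2
          exact ⟨hlt.ne', Or.inr (by simpa using hp)⟩
  rw [himg]
  apply Finset.card_image_of_injOn
  intro p hp q hq hpq
  have hp' := hE p hp
  have hq' := hE q hq
  rw [Sym2.eq_iff] at hpq
  rcases hpq with ⟨h1, h2⟩ | ⟨h1, h2⟩
  · exact Prod.ext h1 h2
  · exfalso
    rw [← h1, ← h2] at hq'
    exact absurd (hp'.trans hq') (lt_irrefl _)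

/-- A connected graph on `Fin N` has at least `N - 1` edges. -/
lemma connected_card_le {N : ℕ} {G : SimpleGraph (Fin N)} (hG : G.Connected) :
    N ≤ G.edgeFinset.card + 1 := by
  obtain ⟨v0⟩ := hG.nonempty
  choose f hf using fun w => hG.exists_walk_length_eq_dist w v0
  have key : (Finset.univ.erase v0).card ≤ G.edgeFinset.card := by
    apply Finset.card_le_card_of_injOn
      (fun w => if h : (f w).Nil then s(v0, v0) else ((f w).firstDart h).edge)
    · intro w hw
      have hw' : w ≠ v0 := (Finset.mem_erase.mp hw).1
      simp only [dif_neg (Walk.not_nil_of_ne hw')]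
      simpa using ((f w).firstDart _).edge_mem
    · intro a ha b hb hab
      have ha' : a ≠ v0 := (Finset.mem_erase.mp ha).1
      have hb' : b ≠ v0 := (Finset.mem_erase.mp hb).1
      have hna : ¬(f a).Nil := Walk.not_nil_of_ne ha'
      have hnb : ¬(f b).Nil := Walk.not_nil_of_ne hb'
      simp only [dif_neg hna, dif_neg hnb] at hab
      rw [dart_edge_eq_iff] at hab
      rcases hab with hab | hab
      · exact congrArg (fun d : G.Dart => d.fst) hab
      · exfalso
        have h1 : a = (f b).getVert 1 := congrArg (fun d : G.Dart => d.fst) hab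
        have h2 : (f a).getVert 1 = b := congrArg (fun d : G.Dart => d.snd) hab
        have hda : G.dist a v0 = (f a).length := (hf a).symm
        have hdb : G.dist b v0 = (f b).length := (hf b).symm
        have hta : G.dist b v0 ≤ (f a).tail.length := by
          simpa using G.dist_le ((f a).tail.copy h2 rfl)
        have htb : G.dist a v0 ≤ (f b).tail.length := by
          simpa using G.dist_le ((f b).tail.copy h1.symm rfl)
        have hla : (f a).tail.length + 1 = (f a).length := Walk.length_tail_add_one hna
        have hlb : (f b).tail.length + 1 = (f b).length := Walk.length_tail_add_one hnb
        omega
  have : (Finset.univ.erase v0).card = N - 1 := by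
    rw [Finset.card_erase_of_mem (Finset.mem_univ _)]
    simp
  have hN : 1 ≤ N := Fin.pos v0
  omega

/-- Any vertex reachable in `graphOf T` from an endpoint of `e` is reachable, in
`graphOf (T.erase e)`, from the other end of the walk or from one of the two
endpoints of `e`. -/
lemma reach_endpoints {T : Finset (Fin n × Fin n)} {e : Fin n × Fin n}
    {z x : Fin n} (w : (graphOf T).Walk z x) :
    (graphOf (T.erase e)).Reachable z x ∨ (graphOf (T.erase e)).Reachable z e.1 ∨
      (graphOf (T.erase e)).Reachable z e.2 := by
  induction w with
  | nil => exact Or.inl (Reachable.refl _)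
  | @cons a b c h q ih =>
    obtain ⟨hne, hp⟩ := graphOf_adj.mp h
    rcases hp with hp | hp
    · by_cases he : (a, b) = e
      · refine Or.inr (Or.inl ?_)
        have : e.1 = a := by rw [← he]
        rw [this]
      · have hadj : (graphOf (T.erase e)).Adj a b :=
          graphOf_adj.mpr ⟨hne, Or.inl (Finset.mem_erase.mpr ⟨he, hp⟩)⟩
        rcases ih with h1 | h1 | h1
        · exact Or.inl (hadj.reachable.trans h1)
        · exact Or.inr (Or.inl (hadj.reachable.trans h1))
        · exact Or.inr (Or.inr (hadj.reachable.trans h1))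
    · by_cases he : (b, a) = e
      · refine Or.inr (Or.inr ?_)
        have : e.2 = a := by rw [← he]
        rw [this]
      · have hadj : (graphOf (T.erase e)).Adj a b :=
          graphOf_adj.mpr ⟨hne, Or.inr (Finset.mem_erase.mpr ⟨he, hp⟩)⟩
        rcases ih with h1 | h1 | h1
        · exact Or.inl (hadj.reachable.trans h1)
        · exact Or.inr (Or.inl (hadj.reachable.trans h1))
        · exact Or.inr (Or.inr (hadj.reachable.trans h1))

/-- A walk in `graphOf T` avoiding the edge `e` yields reachability in
`graphOf (T.erase e)`. -/
lemma reach_of_no_edge {T : Finset (Fin n × Fin n)} (e : Fin n × Fin n)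
    {a b : Fin n} (q : (graphOf T).Walk a b)
    (h : ∀ ed ∈ q.edges, ed ≠ s(e.1, e.2)) :
    (graphOf (T.erase e)).Reachable a b := by
  induction q with
  | nil => exact Reachable.refl _
  | @cons a' b' c' hadj q ih =>
    have hfirst : s(a', b') ≠ s(e.1, e.2) := h _ (by simp)
    have hrest : ∀ ed ∈ q.edges, ed ≠ s(e.1, e.2) := fun ed hed => h ed (by simp [hed])
    obtain ⟨hne, hp⟩ := graphOf_adj.mp hadj
    have hadj' : (graphOf (T.erase e)).Adj a' b' := by
      rcases hp with hp | hp
      · refine graphOf_adj.mpr ⟨hne, Or.inl (Finset.mem_erase.mpr ⟨?_, hp⟩)⟩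
        intro hcontra
        exact hfirst (by rw [← hcontra])
      · refine graphOf_adj.mpr ⟨hne, Or.inr (Finset.mem_erase.mpr ⟨?_, hp⟩)⟩
        intro hcontra
        apply hfirst
        rw [← hcontra]
        exact Sym2.eq_swap
    exact hadj'.reachable.trans (ih hrest)

/-- A trail through a dart `d` can be split into walks avoiding the edge of `d`. -/
lemma walk_split {G : SimpleGraph (Fin n)} {u v : Fin n} (p : G.Walk u v)
    (hp : p.IsTrail) (d : G.Dart) (hd : d ∈ p.darts) :
    ∃ (q1 : G.Walk u d.fst) (q2 : G.Walk d.snd v),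
      (∀ ed ∈ q1.edges, ed ≠ d.edge) ∧ (∀ ed ∈ q2.edges, ed ≠ d.edge) := by
  induction p with
  | nil => simp at hd
  | @cons a b c h q ih =>
    rw [Walk.darts_cons, List.mem_cons] at hd
    rcases hd with hd | hd
    · subst hd
      refine ⟨Walk.nil, q, by simp, ?_⟩
      intro ed hed hcontra
      have := (Walk.isTrail_cons _ _).mp hp
      rw [hcontra] at hed
      exact this.2 hed
    · obtain ⟨ht, hne⟩ := (Walk.isTrail_cons _ _).mp hp
      obtain ⟨q1, q2, hq1, hq2⟩ := ih ht hd
      refine ⟨Walk.cons h q1, q2, ?_, hq2⟩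
      intro ed hed
      rw [Walk.edges_cons, List.mem_cons] at hed
      rcases hed with rfl | hed
      · intro hcontra
        apply hne
        rw [hcontra]
        exact List.mem_map_of_mem hd
      · exact hq1 ed hed

/-- The main exchange argument. -/
lemma exchange (s : Fin n → Fin n → ℝ) (hs : Sim s)
    (T : Finset (Fin n × Fin n)) (hT : IsMST s T)
    (u v : Fin n) (huv : u ≠ v)
    (e : Fin n × Fin n) (heT : e ∈ T) (a b : Fin n)
    (hab : e = (a, b) ∨ e = (b, a))
    (hru : (graphOf (T.erase e)).Reachable u a)
    (hrv : (graphOf (T.erase e)).Reachable b v)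
    (W : (⊤ : SimpleGraph (Fin n)).Walk u v)
    (hlt : ((s a b : ℝ) : WithBot ℝ) < bottleneck s W) : False := by
  obtain ⟨horder, hcard, hconn⟩ := hT.1
  have hn2 : 2 ≤ n := by
    rcases n with _ | _ | n
    · exact absurd u.2 (by omega)
    · have hu := u.isLt
      have hv := v.isLt
      exact absurd (Fin.ext (by omega)) huv
    · omega
  have hA : ∀ z : Fin n, (graphOf (T.erase e)).Reachable z a ∨
      (graphOf (T.erase e)).Reachable z b := by
    intro z
    obtain ⟨w⟩ := hconn z e.1
    have h3 := reach_endpoints (e := e) w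
    rcases hab with rfl | rfl
    · simpa using h3.elim Or.inl id
    · refine (h3.elim (fun h => Or.inr ?_) (fun h => h.elim (fun h => Or.inr ?_)
        (fun h => Or.inl ?_))) <;> simpa using h
  have hsab : s e.1 e.2 = s a b := by
    rcases hab with rfl | rfl
    · rfl
    · exact hs.1 b a
  -- v is not reachable from u after deleting e
  have hvS : ¬ (graphOf (T.erase e)).Reachable u v := by
    intro hr
    have hba : (graphOf (T.erase e)).Reachable a b :=
      hru.symm.trans (hr.trans hrv.symm)
    have hG'conn : (graphOf (T.erase e)).Connected := by
      rw [connected_iff]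
      refine ⟨fun y z => ?_, ⟨u⟩⟩
      have key : ∀ t, (graphOf (T.erase e)).Reachable t a := fun t =>
        (hA t).elim id (fun h => h.trans hba.symm)
      exact (key y).trans (key z).symm
    have hord' : ∀ p ∈ T.erase e, p.1 < p.2 := fun p hp =>
      horder p (Finset.mem_of_mem_erase hp)
    have hc1 := card_graphOf hord'
    have hc2 : (T.erase e).card = T.card - 1 := Finset.card_erase_of_mem heT
    have hle := connected_card_le hG'conn
    omega
  obtain ⟨dW, hdWmem, hdWx, hdWy⟩ := W.exists_boundary_dart
    {z | (graphOf (T.erase e)).Reachable u z} (Reachable.refl u) hvS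
  have hdWx' : (graphOf (T.erase e)).Reachable u dW.fst := hdWx
  have hdWy' : ¬ (graphOf (T.erase e)).Reachable u dW.snd := hdWy
  set x := dW.fst with hxdef
  set y := dW.snd with hydef
  have hxy : x ≠ y := dW.adj.ne
  -- the crossing edge is heavier than s a b
  have hlist : s x y ∈ W.darts.map (fun d => s d.toProd.1 d.toProd.2) :=
    List.mem_map_of_mem hdWmem
  have hnil : W.darts.map (fun d => s d.toProd.1 d.toProd.2) ≠ [] := by
    intro hcontra
    rw [hcontra] at hlist
    simp at hlist
  obtain ⟨mW, hmWmem, hmWeq, hmWle⟩ := minimum_withbot _ hnil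
  have hWeq : bottleneck s W = (mW : WithBot ℝ) := hmWeq
  have hmlt : s a b < mW := by
    rw [hWeq] at hlt
    exact_mod_cast hlt
  have hxylt : s a b < s x y := lt_of_lt_of_le hmlt (hmWle _ hlist)
  -- the replacement edge
  set e' : Fin n × Fin n := if x < y then (x, y) else (y, x) with he'def
  have he'lt : e'.1 < e'.2 := by
    rw [he'def]
    rcases lt_or_gt_of_ne hxy with h | h
    · simp only [if_pos h]
      exact h
    · simp only [if_neg (asymm h)]
      exact h
  have hse' : s e'.1 e'.2 = s x y := by
    rw [he'def]
    split_ifs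
    · rfl
    · exact hs.1 y x
  have he'mem : (x, y) = e' ∨ (y, x) = e' := by
    rw [he'def]
    split_ifs
    · exact Or.inl rfl
    · exact Or.inr rfl
  have hcross : e' ∉ T.erase e := by
    intro hmem
    have hadj : (graphOf (T.erase e)).Adj x y := by
      refine graphOf_adj.mpr ⟨hxy, ?_⟩
      rcases he'mem with h | h
      · exact Or.inl (h ▸ hmem)
      · exact Or.inr (h ▸ hmem)
    exact hdWy' (hdWx'.trans hadj.reachable)
  set T' := insert e' (T.erase e) with hT'def
  have hT'tree : IsTreeEdges T' := by
    refine ⟨?_, ?_, ?_⟩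
    · intro p hp
      rcases Finset.mem_insert.mp hp with rfl | hp'
      · exact he'lt
      · exact horder p (Finset.mem_of_mem_erase hp')
    · rw [Finset.card_insert_of_notMem hcross, Finset.card_erase_of_mem heT, hcard]
      omega
    · rw [connected_iff]
      refine ⟨?_, ⟨u⟩⟩
      have hmono : graphOf (T.erase e) ≤ graphOf T' :=
        graphOf_mono (Finset.subset_insert _ _)
      have hae : ∀ {p q : Fin n}, (graphOf (T.erase e)).Reachable p q →
          (graphOf T').Reachable p q := fun h => h.mono hmono
      have hua : (graphOf T').Reachable u a := hae hru
      have hub : (graphOf T').Reachable u b := by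
        have hxy' : (graphOf T').Adj x y := by
          refine graphOf_adj.mpr ⟨hxy, ?_⟩
          rcases he'mem with h | h
          · exact Or.inl (h ▸ Finset.mem_insert_self _ _)
          · exact Or.inr (h ▸ Finset.mem_insert_self _ _)
        have hyb : (graphOf (T.erase e)).Reachable y b := by
          rcases hA y with h | h
          · exact absurd (hru.trans h.symm) hdWy'
          · exact h
        exact (hae hdWx').trans (hxy'.reachable.trans (hae hyb))
      intro p q
      have key : ∀ t, (graphOf T').Reachable u t := fun t => by
        rcases hA t with h | h
        · exact hua.trans (hae h).symm
        · exact hub.trans (hae h).symm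
      exact (key p).symm.trans (key q)
  have h1 : wt s T' = s e'.1 e'.2 + wt s (T.erase e) := by
    rw [hT'def]
    simp only [wt]
    exact Finset.sum_insert hcross
  have h2 : s e.1 e.2 + wt s (T.erase e) = wt s T := by
    simp only [wt]
    exact Finset.add_sum_erase _ (fun p => s p.1 p.2) heT
  have hle := hT.2 T' hT'tree
  rw [h1, hse', ← h2, hsab] at hle
  linarith

end MSTAux

/-- In a maximum spanning tree, for every pair of vertices the minimum-weight
edge on the unique tree path equals the maximum, over all paths in the complete
graph, of the minimum edge weight along the path. -/
theorem mst_widest_path {n : ℕ} (s : Fin n → Fin n → ℝ) (hs : Sim s)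
    (T : Finset (Fin n × Fin n)) (hT : IsMST s T)
    (u v : Fin n) (huv : u ≠ v)
    (P : (graphOf T).Walk u v) (hP : P.IsPath) :
    IsGreatest {x : WithBot ℝ |
        ∃ W : (⊤ : SimpleGraph (Fin n)).Walk u v, W.IsPath ∧ x = bottleneck s W}
      (bottleneck s P) := by
  classical
  constructor
  · -- membership: the tree path itself, viewed in the complete graph
    refine ⟨P.mapLe le_top, hP.mapLe le_top, ?_⟩
    unfold bottleneck
    congr 1
    rw [SimpleGraph.Walk.darts_map, List.map_map]
    rfl
  · -- upper bound
    rintro xval ⟨W, hW, rfl⟩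
    by_contra hnle
    have hlt : bottleneck s P < bottleneck s W := lt_of_not_ge hnle
    have hnilP : P.darts.map (fun d => s d.toProd.1 d.toProd.2) ≠ [] := by
      cases P with
      | nil => exact absurd rfl huv
      | cons h q => simp
    obtain ⟨m, hmmem, hmeq, hmle⟩ := MSTAux.minimum_withbot _ hnilP
    have hbP : bottleneck s P = (m : WithBot ℝ) := hmeq
    obtain ⟨d0, hd0mem, hd0eq⟩ := List.mem_map.mp hmmem
    obtain ⟨q1, q2, hq1, hq2⟩ := MSTAux.walk_split P hP.isTrail d0 hd0mem
    have hadj := d0.adj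
    rw [MSTAux.graphOf_adj] at hadj
    obtain ⟨hne0, hor⟩ := hadj
    have hedge : d0.edge = s(d0.fst, d0.snd) := rfl
    have hltm : ((s d0.fst d0.snd : ℝ) : WithBot ℝ) < bottleneck s W := by
      have : s d0.fst d0.snd = m := hd0eq
      rw [this, ← hbP]
      exact hlt
    rcases hor with hmem | hmem
    · refine MSTAux.exchange s hs T hT u v huv (d0.fst, d0.snd) hmem d0.fst d0.snd
        (Or.inl rfl) ?_ ?_ W hltm
      · exact MSTAux.reach_of_no_edge _ q1 (fun ed hed => hq1 ed hed)
      · exact MSTAux.reach_of_no_edge _ q2 (fun ed hed => hq2 ed hed)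
    · refine MSTAux.exchange s hs T hT u v huv (d0.snd, d0.fst) hmem d0.fst d0.snd
        (Or.inr rfl) ?_ ?_ W hltm
      · refine MSTAux.reach_of_no_edge _ q1 (fun ed hed => ?_)
        have := hq1 ed hed
        intro hcontra
        apply this
        rw [hcontra, hedge]
        exact Sym2.eq_swap.symm
      · refine MSTAux.reach_of_no_edge _ q2 (fun ed hed => ?_)
        have := hq2 ed hed
        intro hcontra
        apply this
        rw [hcontra, hedge]
        exact Sym2.eq_swap.symm
end
end
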